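/- Let (u_p, u_e) be a solution of the bulk system with initial values u_p(0) = α > 0, u_e(0) = β > 0, u_p'(0) = u_e'(0) = 0, and suppose that for some R > 0 both u_p and u_e are positive and nonincreasing on [0, R). Then necessarily F α^{3/2} − E β^{3/2} < 0 and B β^{3/2} − A α^{3/2} < 0. -/

import Mathlib

open Set Filter Topology

noncomputable section

lemma rpow32_eq_cube {a : ℝ} (ha : 0 ≤ a) : a ^ ((3:ℝ)/2) = (a ^ ((1:ℝ)/2))^(3:ℕ) := by
  rw [← Real.rpow_natCast (a ^ ((1:ℝ)/2)) 3, ← Real.rpow_mul ha]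
  norm_num

lemma rpow32_sub_le {a b : ℝ} (ha : 0 ≤ a) (hab : a ≤ b) :
    b ^ ((3:ℝ)/2) - a ^ ((3:ℝ)/2) ≤ 3/2 * b ^ ((1:ℝ)/2) * (b - a) := by
  have hb : 0 ≤ b := ha.trans hab
  set x := a ^ ((1:ℝ)/2) with hx
  set y := b ^ ((1:ℝ)/2) with hy
  have hx0 : 0 ≤ x := Real.rpow_nonneg ha _
  have hxy : x ≤ y := Real.rpow_le_rpow ha hab (by norm_num)
  have hxa : x^(2:ℕ) = a := by
    rw [hx, ← Real.rpow_natCast (a ^ ((1:ℝ)/2)) 2, ← Real.rpow_mul ha]; norm_num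
  have hyb : y^(2:ℕ) = b := by
    rw [hy, ← Real.rpow_natCast (b ^ ((1:ℝ)/2)) 2, ← Real.rpow_mul hb]; norm_num
  rw [rpow32_eq_cube ha, rpow32_eq_cube hb, ← hx, ← hy, ← hxa, ← hyb]
  nlinarith [sq_nonneg (y - x), mul_nonneg hx0 (sq_nonneg (y-x))]

lemma rpow32_sub_ge {a b : ℝ} (ha : 0 ≤ a) (hab : a ≤ b) :
    3/2 * a ^ ((1:ℝ)/2) * (b - a) ≤ b ^ ((3:ℝ)/2) - a ^ ((3:ℝ)/2) := by
  have hb : 0 ≤ b := ha.trans hab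
  set x := a ^ ((1:ℝ)/2) with hx
  set y := b ^ ((1:ℝ)/2) with hy
  have hx0 : 0 ≤ x := Real.rpow_nonneg ha _
  have hxy : x ≤ y := Real.rpow_le_rpow ha hab (by norm_num)
  have hxa : x^(2:ℕ) = a := by
    rw [hx, ← Real.rpow_natCast (a ^ ((1:ℝ)/2)) 2, ← Real.rpow_mul ha]; norm_num
  have hyb : y^(2:ℕ) = b := by
    rw [hy, ← Real.rpow_natCast (b ^ ((1:ℝ)/2)) 2, ← Real.rpow_mul hb]; norm_num
  rw [rpow32_eq_cube ha, rpow32_eq_cube hb, ← hx, ← hy, ← hxa, ← hyb]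
  nlinarith [sq_nonneg (y - x), mul_nonneg hx0 (sq_nonneg (y-x))]

-- antitone implies derivWithin nonpos
lemma antitone_dw_nonpos {R x : ℝ} {f : ℝ → ℝ} (hm : AntitoneOn f (Ico 0 R))
    (hx : x ∈ Ico 0 R) (hd : DifferentiableWithinAt ℝ f (Ico 0 R) x) :
    derivWithin f (Ico 0 R) x ≤ 0 := by
  have hdd := hd.hasDerivWithinAt
  rw [hasDerivWithinAt_iff_tendsto_slope] at hdd
  have hsub : Ioo x R ⊆ Ico 0 R \ {x} := fun y hy =>
    ⟨⟨hx.1.trans hy.1.le, hy.2⟩, by simp [hy.1.ne']⟩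
  have hdd2 := hdd.mono_left (nhdsWithin_mono _ hsub)
  have hne : (𝓝[Ioo x R] x).NeBot := by
    rw [nhdsWithin_Ioo_eq_nhdsGT hx.2]; infer_instance
  refine le_of_tendsto hdd2 ?_
  filter_upwards [self_mem_nhdsWithin] with y hy
  rw [slope_def_field]
  apply div_nonpos_of_nonpos_of_nonneg
  · have := hm hx ⟨hx.1.trans hy.1.le, hy.2⟩ hy.1.le
    linarith
  · linarith [hy.1]

-- the slope limit lemma
lemma slope_lim {R : ℝ} (hR : 0 < R) {f : ℝ → ℝ} (hf : ContDiffOn ℝ 2 f (Ico 0 R))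
    (hf'0 : derivWithin f (Ico 0 R) 0 = 0) :
    Tendsto (fun r => derivWithin f (Ico 0 R) r / r) (𝓝[Ioo 0 R] 0)
      (𝓝 (derivWithin (derivWithin f (Ico 0 R)) (Ico 0 R) 0)) := by
  have hu : UniqueDiffOn ℝ (Ico 0 R) := uniqueDiffOn_Ico 0 R
  have h0s : (0:ℝ) ∈ Ico 0 R := ⟨le_refl 0, hR⟩
  have hf1 : ContDiffOn ℝ 1 (derivWithin f (Ico 0 R)) (Ico 0 R) :=
    hf.derivWithin hu (by norm_num)
  have hd : HasDerivWithinAt (derivWithin f (Ico 0 R))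
      (derivWithin (derivWithin f (Ico 0 R)) (Ico 0 R) 0) (Ico 0 R) 0 :=
    ((hf1.differentiableOn one_ne_zero) 0 h0s).hasDerivWithinAt
  rw [hasDerivWithinAt_iff_tendsto_slope, Set.Ico_diff_left] at hd
  refine hd.congr fun r => ?_
  rw [slope_def_field, hf'0, sub_zero, sub_zero]

lemma ioo_nebot {R : ℝ} (hR : 0 < R) : (𝓝[Ioo (0:ℝ) R] 0).NeBot := by
  rw [nhdsWithin_Ioo_eq_nhdsGT hR]; infer_instance

-- φ(0) = 3 f''(0)
lemma key1 {R : ℝ} (hR : 0 < R) {f φ : ℝ → ℝ} (hf : ContDiffOn ℝ 2 f (Ico 0 R))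
    (hf'0 : derivWithin f (Ico 0 R) 0 = 0)
    (hφ : ContinuousWithinAt φ (Ico 0 R) 0)
    (heq : ∀ r ∈ Ioo 0 R,
      derivWithin (derivWithin f (Ico 0 R)) (Ico 0 R) r
        + 2 / r * derivWithin f (Ico 0 R) r = φ r) :
    φ 0 = 3 * derivWithin (derivWithin f (Ico 0 R)) (Ico 0 R) 0 := by
  have hu : UniqueDiffOn ℝ (Ico 0 R) := uniqueDiffOn_Ico 0 R
  have h0s : (0:ℝ) ∈ Ico 0 R := ⟨le_refl 0, hR⟩
  set L := derivWithin (derivWithin f (Ico 0 R)) (Ico 0 R) 0 with hL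
  have hne : (𝓝[Ioo (0:ℝ) R] 0).NeBot := ioo_nebot hR
  have h1 := slope_lim hR hf hf'0
  have hf1 : ContDiffOn ℝ 1 (derivWithin f (Ico 0 R)) (Ico 0 R) :=
    hf.derivWithin hu (by norm_num)
  have h2 : Tendsto (fun r => derivWithin (derivWithin f (Ico 0 R)) (Ico 0 R) r)
      (𝓝[Ioo 0 R] 0) (𝓝 L) :=
    ((hf1.continuousOn_derivWithin hu le_rfl 0 h0s).mono Ioo_subset_Ico_self).tendsto
  have h3 : Tendsto φ (𝓝[Ioo 0 R] 0) (𝓝 (φ 0)) :=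
    (hφ.mono Ioo_subset_Ico_self).tendsto
  have h4 : Tendsto (fun r => derivWithin (derivWithin f (Ico 0 R)) (Ico 0 R) r)
      (𝓝[Ioo 0 R] 0) (𝓝 (φ 0 - 2 * L)) := by
    refine Tendsto.congr' ?_ (h3.sub ((h1.const_mul 2)))
    filter_upwards [self_mem_nhdsWithin] with r hr
    have := heq r hr
    have hr0 : r ≠ 0 := hr.1.ne'
    field_simp at this ⊢
    linarith
  have := tendsto_nhds_unique h4 h2
  linarith

-- f''(0) ≤ 0 for antitone f with f'(0) = 0
lemma secondDeriv_nonpos {R : ℝ} (hR : 0 < R) {f : ℝ → ℝ}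
    (hf : ContDiffOn ℝ 2 f (Ico 0 R)) (hf'0 : derivWithin f (Ico 0 R) 0 = 0)
    (hm : AntitoneOn f (Ico 0 R)) :
    derivWithin (derivWithin f (Ico 0 R)) (Ico 0 R) 0 ≤ 0 := by
  have hne : (𝓝[Ioo (0:ℝ) R] 0).NeBot := ioo_nebot hR
  refine le_of_tendsto (slope_lim hR hf hf'0) ?_
  filter_upwards [self_mem_nhdsWithin] with r hr
  apply div_nonpos_of_nonpos_of_nonneg _ hr.1.le
  exact antitone_dw_nonpos hm ⟨hr.1.le, hr.2⟩
    ((hf.differentiableOn (by norm_num)) r ⟨hr.1.le, hr.2⟩)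

-- extract a δ from an eventually statement
lemma extract_delta {R : ℝ} (hR : 0 < R) {P : ℝ → Prop}
    (h : ∀ᶠ r in 𝓝[Ioo (0:ℝ) R] 0, P r) :
    ∃ δ, 0 < δ ∧ δ < R ∧ ∀ r ∈ Ioo (0:ℝ) δ, P r := by
  rw [eventually_iff, nhdsWithin_Ioo_eq_nhdsGT hR,
    mem_nhdsGT_iff_exists_Ioo_subset] at h
  obtain ⟨u, hu, hsub⟩ := h
  have hu' : (0:ℝ) < u := hu
  refine ⟨min u R / 2, by positivity, ?_, fun r hr => ?_⟩
  · have := min_le_right u R; linarith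
  · have h1 : r ∈ Ioo 0 u := ⟨hr.1, by have := min_le_left u R; have := hr.2; linarith⟩
    exact hsub h1


-- parabola bounds
lemma upper_bound {R : ℝ} (hR : 0 < R) {f : ℝ → ℝ}
    (hf : ContDiffOn ℝ 2 f (Ico 0 R)) (hf'0 : derivWithin f (Ico 0 R) 0 = 0)
    {c : ℝ} (hc : derivWithin (derivWithin f (Ico 0 R)) (Ico 0 R) 0 < c) :
    ∃ δ, 0 < δ ∧ δ < R ∧ ∀ r ∈ Ioo (0:ℝ) δ, f r ≤ f 0 + c/2 * r^2 := by
  have hev : ∀ᶠ r in 𝓝[Ioo (0:ℝ) R] 0, derivWithin f (Ico 0 R) r / r < c :=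
    (slope_lim hR hf hf'0).eventually_lt_const hc
  obtain ⟨δ, hδ, hδR, hP⟩ := extract_delta hR hev
  refine ⟨δ, hδ, hδR, fun r hr => ?_⟩
  have hsub : Icc (0:ℝ) r ⊆ Ico 0 R := fun t ht => ⟨ht.1, lt_of_le_of_lt ht.2 (hr.2.trans hδR)⟩
  have key : ∀ t ∈ Ioo (0:ℝ) r, HasDerivAt (fun t => f 0 + c/2 * t^2 - f t)
      (c/2 * (2 * t^1) - deriv f t) t ∧ 0 ≤ c/2 * (2 * t^1) - deriv f t := by
    intro t ht
    have hmem : Ico (0:ℝ) R ∈ 𝓝 t := Ico_mem_nhds ht.1 (ht.2.trans (hr.2.trans hδR))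
    have hdf : DifferentiableAt ℝ f t :=
      ((hf.differentiableOn (by norm_num)) t (hsub ⟨ht.1.le, ht.2.le⟩)).differentiableAt hmem
    constructor
    · have h1 : HasDerivAt (fun x : ℝ => x^2) ((2:ℕ) * t^1) t := hasDerivAt_pow 2 t
      exact (((h1.const_mul (c/2)).const_add (f 0)).sub hdf.hasDerivAt).congr_deriv (by push_cast; ring)
    · have hPt : derivWithin f (Ico 0 R) t / t < c := hP t ⟨ht.1, ht.2.trans hr.2⟩
      rw [div_lt_iff₀ ht.1] at hPt
      have : deriv f t = derivWithin f (Ico 0 R) t := (derivWithin_of_mem_nhds hmem).symm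
      rw [this]
      nlinarith [ht.1]
  have hmono : MonotoneOn (fun t => f 0 + c/2 * t^2 - f t) (Icc 0 r) := by
    apply monotoneOn_of_deriv_nonneg (convex_Icc 0 r)
    · exact (continuousOn_const.add (continuousOn_const.mul (continuousOn_pow 2))).sub
        ((hf.continuousOn).mono hsub)
    · rw [interior_Icc]
      exact fun t ht => ((key t ht).1).differentiableAt.differentiableWithinAt
    · rw [interior_Icc]
      intro t ht
      rw [(key t ht).1.deriv]
      exact (key t ht).2
  have := hmono (left_mem_Icc.mpr hr.1.le) (right_mem_Icc.mpr hr.1.le) hr.1.le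
  simp only at this
  nlinarith [this]

lemma lower_bound {R : ℝ} (hR : 0 < R) {f : ℝ → ℝ}
    (hf : ContDiffOn ℝ 2 f (Ico 0 R)) (hf'0 : derivWithin f (Ico 0 R) 0 = 0)
    {c : ℝ} (hc : c < derivWithin (derivWithin f (Ico 0 R)) (Ico 0 R) 0) :
    ∃ δ, 0 < δ ∧ δ < R ∧ ∀ r ∈ Ioo (0:ℝ) δ, f 0 + c/2 * r^2 ≤ f r := by
  have hev : ∀ᶠ r in 𝓝[Ioo (0:ℝ) R] 0, c < derivWithin f (Ico 0 R) r / r :=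
    (slope_lim hR hf hf'0).eventually_const_lt hc
  obtain ⟨δ, hδ, hδR, hP⟩ := extract_delta hR hev
  refine ⟨δ, hδ, hδR, fun r hr => ?_⟩
  have hsub : Icc (0:ℝ) r ⊆ Ico 0 R := fun t ht => ⟨ht.1, lt_of_le_of_lt ht.2 (hr.2.trans hδR)⟩
  have key : ∀ t ∈ Ioo (0:ℝ) r, HasDerivAt (fun t => f 0 + c/2 * t^2 - f t)
      (c/2 * (2 * t^1) - deriv f t) t ∧ c/2 * (2 * t^1) - deriv f t ≤ 0 := by
    intro t ht
    have hmem : Ico (0:ℝ) R ∈ 𝓝 t := Ico_mem_nhds ht.1 (ht.2.trans (hr.2.trans hδR))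
    have hdf : DifferentiableAt ℝ f t :=
      ((hf.differentiableOn (by norm_num)) t (hsub ⟨ht.1.le, ht.2.le⟩)).differentiableAt hmem
    constructor
    · have h1 : HasDerivAt (fun x : ℝ => x^2) ((2:ℕ) * t^1) t := hasDerivAt_pow 2 t
      exact (((h1.const_mul (c/2)).const_add (f 0)).sub hdf.hasDerivAt).congr_deriv (by push_cast; ring)
    · have hPt : c < derivWithin f (Ico 0 R) t / t := hP t ⟨ht.1, ht.2.trans hr.2⟩
      rw [lt_div_iff₀ ht.1] at hPt
      have : deriv f t = derivWithin f (Ico 0 R) t := (derivWithin_of_mem_nhds hmem).symm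
      rw [this]
      nlinarith [ht.1]
  have hmono : AntitoneOn (fun t => f 0 + c/2 * t^2 - f t) (Icc 0 r) := by
    apply antitoneOn_of_deriv_nonpos (convex_Icc 0 r)
    · exact (continuousOn_const.add (continuousOn_const.mul (continuousOn_pow 2))).sub
        ((hf.continuousOn).mono hsub)
    · rw [interior_Icc]
      exact fun t ht => ((key t ht).1).differentiableAt.differentiableWithinAt
    · rw [interior_Icc]
      intro t ht
      rw [(key t ht).1.deriv]
      exact (key t ht).2
  have := hmono (left_mem_Icc.mpr hr.1.le) (right_mem_Icc.mpr hr.1.le) hr.1.le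
  simp only at this
  nlinarith [this]

-- if the forcing is positive on (0,δ), f cannot be antitone
lemma no_pos_forcing {R δ : ℝ} (hR : 0 < R) (hδ : 0 < δ) (hδR : δ < R) {f : ℝ → ℝ}
    (hf : ContDiffOn ℝ 2 f (Ico 0 R)) (hm : AntitoneOn f (Ico 0 R))
    (hpos : ∀ r ∈ Ioo (0:ℝ) δ,
      0 < derivWithin (derivWithin f (Ico 0 R)) (Ico 0 R) r
        + 2 / r * derivWithin f (Ico 0 R) r) : False := by
  have hu : UniqueDiffOn ℝ (Ico 0 R) := uniqueDiffOn_Ico 0 R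
  have hf1 : ContDiffOn ℝ 1 (derivWithin f (Ico 0 R)) (Ico 0 R) :=
    hf.derivWithin hu (by norm_num)
  set g : ℝ → ℝ := fun r => r^2 * derivWithin f (Ico 0 R) r with hg
  have hsub : Icc (0:ℝ) (δ/2) ⊆ Ico 0 R := fun t ht =>
    ⟨ht.1, lt_of_le_of_lt ht.2 (by linarith)⟩
  have hmono : StrictMonoOn g (Icc 0 (δ/2)) := by
    apply strictMonoOn_of_deriv_pos (convex_Icc 0 (δ/2))
    · exact (continuousOn_pow 2).mul ((hf1.continuousOn).mono hsub)
    · rw [interior_Icc]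
      intro t ht
      have htR : t < R := by have := ht.2; linarith
      have hmem : Ico (0:ℝ) R ∈ 𝓝 t := Ico_mem_nhds ht.1 htR
      have hdf' : HasDerivAt (derivWithin f (Ico 0 R))
          (derivWithin (derivWithin f (Ico 0 R)) (Ico 0 R) t) t :=
        (((hf1.differentiableOn one_ne_zero) t ⟨ht.1.le, htR⟩).hasDerivWithinAt).hasDerivAt hmem
      have h1 : HasDerivAt (fun x : ℝ => x^2) ((2:ℕ) * t^1) t := hasDerivAt_pow 2 t
      have H : HasDerivAt g
          (2 * t * derivWithin f (Ico 0 R) t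
            + t^2 * derivWithin (derivWithin f (Ico 0 R)) (Ico 0 R) t) t := by
        have := h1.mul hdf'
        refine this.congr_deriv ?_
        push_cast; ring
      rw [H.deriv]
      have hp := hpos t ⟨ht.1, by linarith [ht.2]⟩
      have ht0 : t ≠ 0 := ht.1.ne'
      have h2 : 2 * t * derivWithin f (Ico 0 R) t
            + t^2 * derivWithin (derivWithin f (Ico 0 R)) (Ico 0 R) t
          = t^2 * (derivWithin (derivWithin f (Ico 0 R)) (Ico 0 R) t
            + 2 / t * derivWithin f (Ico 0 R) t) := by
        field_simp; ring
      rw [h2]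
      positivity
  have h0 : g 0 = 0 := by simp [hg]
  have hlt : g 0 < g (δ/2) :=
    hmono (left_mem_Icc.mpr (by linarith)) (right_mem_Icc.mpr (by linarith)) (by linarith)
  rw [h0] at hlt
  have hd2 : (δ/2) ∈ Ico (0:ℝ) R := ⟨by linarith, by linarith⟩
  have hnp : derivWithin f (Ico 0 R) (δ/2) ≤ 0 :=
    antitone_dw_nonpos hm hd2 ((hf.differentiableOn (by norm_num)) _ hd2)
  have : g (δ/2) ≤ 0 := by
    rw [hg]
    simp only
    nlinarith
  linarith

set_option maxHeartbeats 2000000 in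
lemma main_aux {R c1 c2 α β : ℝ} (hR : 0 < R) (hc1 : 0 < c1) (hc2 : 0 < c2)
    (hα : 0 < α) (hβ : 0 < β) {f g : ℝ → ℝ}
    (hf : ContDiffOn ℝ 2 f (Ico 0 R)) (hg : ContDiffOn ℝ 2 g (Ico 0 R))
    (hf0 : f 0 = α) (hg0 : g 0 = β)
    (hf'0 : derivWithin f (Ico 0 R) 0 = 0) (hg'0 : derivWithin g (Ico 0 R) 0 = 0)
    (heq : ∀ r ∈ Ioo (0:ℝ) R,
      derivWithin (derivWithin f (Ico 0 R)) (Ico 0 R) r + 2/r * derivWithin f (Ico 0 R) r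
        = c1 * f r ^ ((3:ℝ)/2) - c2 * g r ^ ((3:ℝ)/2))
    (hfpos : ∀ r ∈ Ico (0:ℝ) R, 0 < f r) (hgpos : ∀ r ∈ Ico (0:ℝ) R, 0 < g r)
    (hmf : AntitoneOn f (Ico 0 R))
    (hLg : derivWithin (derivWithin g (Ico 0 R)) (Ico 0 R) 0 < 0)
    (hv0 : c1 * α ^ ((3:ℝ)/2) - c2 * β ^ ((3:ℝ)/2) = 0) : False := by
  have h0s : (0:ℝ) ∈ Ico 0 R := ⟨le_refl 0, hR⟩
  set Lg := derivWithin (derivWithin g (Ico 0 R)) (Ico 0 R) 0 with hLgd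
  -- f''(0) = 0
  have hLf : derivWithin (derivWithin f (Ico 0 R)) (Ico 0 R) 0 = 0 := by
    have hcont : ContinuousWithinAt
        (fun r => c1 * f r ^ ((3:ℝ)/2) - c2 * g r ^ ((3:ℝ)/2)) (Ico 0 R) 0 := by
      have cwf : ContinuousWithinAt f (Ico 0 R) 0 := hf.continuousOn 0 h0s
      have cwg : ContinuousWithinAt g (Ico 0 R) 0 := hg.continuousOn 0 h0s
      exact (continuousWithinAt_const.mul
          (cwf.rpow_const (Or.inl (by rw [hf0]; exact hα.ne')))).sub
        (continuousWithinAt_const.mul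
          (cwg.rpow_const (Or.inl (by rw [hg0]; exact hβ.ne'))))
    have := key1 hR hf hf'0 hcont heq
    rw [hf0, hg0, hv0] at this
    linarith
  -- constants
  set sβ : ℝ := (β/2) ^ ((1:ℝ)/2) with hsβ
  have hsβpos : 0 < sβ := Real.rpow_pos_of_pos (by linarith) _
  set G : ℝ := 3/2 * c2 * sβ * (-(Lg/4)) with hG
  have hGpos : 0 < G := by
    have : 0 < -(Lg/4) := by linarith
    positivity
  set C1 : ℝ := 3/4 * c1 * α ^ ((1:ℝ)/2) with hC1
  have hα12 : 0 < α ^ ((1:ℝ)/2) := Real.rpow_pos_of_pos hα _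
  have hC1pos : 0 < C1 := by positivity
  set ε : ℝ := G / (2 * C1) with hε
  have hεpos : 0 < ε := by positivity
  have hCε : C1 * ε = G / 2 := by
    rw [hε]
    field_simp
  -- three deltas
  obtain ⟨δ₁, hδ₁, hδ₁R, hP₁⟩ := upper_bound hR hg hg'0 (show Lg < Lg/2 by linarith)
  obtain ⟨δ₂, hδ₂, hδ₂R, hP₂⟩ := lower_bound hR hf hf'0 (show -ε < _ by rw [hLf]; linarith)
  have hgev : ∀ᶠ r in 𝓝[Ioo (0:ℝ) R] 0, β/2 < g r := by
    have : Tendsto g (𝓝[Ioo (0:ℝ) R] 0) (𝓝 β) := by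
      rw [← hg0]
      exact ((hg.continuousOn 0 h0s).mono Ioo_subset_Ico_self).tendsto
    exact this.eventually_const_lt (by linarith)
  obtain ⟨δ₃, hδ₃, hδ₃R, hP₃⟩ := extract_delta hR hgev
  set δ := min (min δ₁ δ₂) δ₃ with hδd
  have hδpos : 0 < δ := lt_min (lt_min hδ₁ hδ₂) hδ₃
  have hδR : δ < R := lt_of_le_of_lt (min_le_right _ _) hδ₃R
  refine no_pos_forcing hR hδpos hδR hf hmf fun r hr => ?_
  have hr1 : r ∈ Ioo (0:ℝ) δ₁ := ⟨hr.1, lt_of_lt_of_le hr.2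
    ((min_le_left _ _).trans (min_le_left _ _))⟩
  have hr2 : r ∈ Ioo (0:ℝ) δ₂ := ⟨hr.1, lt_of_lt_of_le hr.2
    ((min_le_left _ _).trans (min_le_right _ _))⟩
  have hr3 : r ∈ Ioo (0:ℝ) δ₃ := ⟨hr.1, lt_of_lt_of_le hr.2 (min_le_right _ _)⟩
  have hrR : r ∈ Ioo (0:ℝ) R := ⟨hr.1, hr.2.trans hδR⟩
  have hrIco : r ∈ Ico (0:ℝ) R := ⟨hr.1.le, hrR.2⟩
  rw [heq r hrR]
  have hr2pos : (0:ℝ) < r^2 := pow_pos hr.1 2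
  -- bounds
  have hfu : f r ≤ α := by rw [← hf0]; exact hmf h0s hrIco hr.1.le
  have hfl : α - ε/2 * r^2 ≤ f r := by
    have := hP₂ r hr2
    rw [hf0] at this
    linarith
  have hgu : g r ≤ β + Lg/4 * r^2 := by
    have := hP₁ r hr1
    rw [hg0] at this
    linarith
  have hguβ : g r ≤ β := by
    have : Lg/4 * r^2 ≤ 0 := mul_nonpos_of_nonpos_of_nonneg (by linarith) hr2pos.le
    linarith
  have hgl : β/2 < g r := hP₃ r hr3
  have hf0le : (0:ℝ) ≤ f r := (hfpos r hrIco).le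
  have hg0le : (0:ℝ) ≤ g r := (hgpos r hrIco).le
  -- rpow bounds
  have hA : α ^ ((3:ℝ)/2) - f r ^ ((3:ℝ)/2) ≤ 3/2 * α ^ ((1:ℝ)/2) * (ε/2 * r^2) := by
    have h1 := rpow32_sub_le hf0le hfu
    have h2 : 3/2 * α ^ ((1:ℝ)/2) * (α - f r) ≤ 3/2 * α ^ ((1:ℝ)/2) * (ε/2 * r^2) := by
      apply mul_le_mul_of_nonneg_left (by linarith) (by positivity)
    linarith
  have hB : 3/2 * sβ * (-(Lg/4) * r^2) ≤ β ^ ((3:ℝ)/2) - g r ^ ((3:ℝ)/2) := by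
    have h1 := rpow32_sub_ge hg0le hguβ
    have hu : sβ ≤ g r ^ ((1:ℝ)/2) :=
      Real.rpow_le_rpow (by linarith) hgl.le (by norm_num)
    have ht : -(Lg/4) * r^2 ≤ β - g r := by linarith
    have hnn : (0:ℝ) ≤ -(Lg/4) * r^2 := mul_nonneg (by linarith) hr2pos.le
    have h2 : 3/2 * sβ * (-(Lg/4) * r^2) ≤ 3/2 * g r ^ ((1:ℝ)/2) * (β - g r) := by
      have hh : sβ * (-(Lg/4) * r^2) ≤ g r ^ ((1:ℝ)/2) * (β - g r) :=
        mul_le_mul hu ht hnn (Real.rpow_nonneg hg0le ((1:ℝ)/2))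
      linarith
    linarith
  -- combine
  have e1 : c1 * (α ^ ((3:ℝ)/2) - f r ^ ((3:ℝ)/2)) ≤ c1 * (3/2 * α ^ ((1:ℝ)/2) * (ε/2 * r^2)) :=
    mul_le_mul_of_nonneg_left hA hc1.le
  have e1' : c1 * (3/2 * α ^ ((1:ℝ)/2) * (ε/2 * r^2)) = C1 * ε * r^2 := by
    rw [hC1]; ring
  have e2 : c2 * (3/2 * sβ * (-(Lg/4) * r^2)) ≤ c2 * (β ^ ((3:ℝ)/2) - g r ^ ((3:ℝ)/2)) :=
    mul_le_mul_of_nonneg_left hB hc2.le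
  have e2' : c2 * (3/2 * sβ * (-(Lg/4) * r^2)) = G * r^2 := by
    rw [hG]; ring
  have e5 : C1 * ε * r^2 = G/2 * r^2 := by rw [hCε]
  have e6 : (0:ℝ) < G/2 * r^2 := mul_pos (by linarith) hr2pos
  rw [e1', e5] at e1
  rw [e2'] at e2
  linarith [e1, e2, e6, hv0]


/-- `(u_p, u_e)` is a solution of the bulk system on the set `s ⊆ [0,∞)` (which should
contain `0`): both functions are `C²` on `s`, satisfy the initial conditions
`u_p(0) = α`, `u_e(0) = β`, `u_p'(0) = u_e'(0) = 0`, are positive on `s`, and satisfy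
`u_p'' + (2/r) u_p' = F u_p^{3/2} − E u_e^{3/2}`,
`u_e'' + (2/r) u_e' = B u_e^{3/2} − A u_p^{3/2}` at every `r ∈ s` with `r > 0`. -/
def IsBulkSolOn (A B E F α β : ℝ) (s : Set ℝ) (up ue : ℝ → ℝ) : Prop :=
  ContDiffOn ℝ 2 up s ∧ ContDiffOn ℝ 2 ue s ∧
  up 0 = α ∧ ue 0 = β ∧
  derivWithin up s 0 = 0 ∧ derivWithin ue s 0 = 0 ∧
  (∀ r ∈ s, 0 < r →
    derivWithin (derivWithin up s) s r + 2 / r * derivWithin up s r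
      = F * up r ^ ((3:ℝ)/2) - E * ue r ^ ((3:ℝ)/2) ∧
    derivWithin (derivWithin ue s) s r + 2 / r * derivWithin ue s r
      = B * ue r ^ ((3:ℝ)/2) - A * up r ^ ((3:ℝ)/2)) ∧
  (∀ r ∈ s, 0 < up r ∧ 0 < ue r)

/-- Lemma 5.2: only initial values with `F α^{3/2} − E β^{3/2} < 0` and
`B β^{3/2} − A α^{3/2} < 0` can yield solutions with both densities nonincreasing. -/
theorem stmt11 (A B E F : ℝ) (hA : 0 < A) (hB : 0 < B) (hE : 0 < E) (hF : 0 < F)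
    (hEF : F < E) (hAB : B < A) (hBFEA : B * F < E * A)
    (α β R : ℝ) (hα : 0 < α) (hβ : 0 < β) (hR : 0 < R)
    (up ue : ℝ → ℝ) (hsol : IsBulkSolOn A B E F α β (Ico 0 R) up ue)
    (hmonop : AntitoneOn up (Ico 0 R)) (hmonoe : AntitoneOn ue (Ico 0 R)) :
    F * α ^ ((3:ℝ)/2) - E * β ^ ((3:ℝ)/2) < 0 ∧
    B * β ^ ((3:ℝ)/2) - A * α ^ ((3:ℝ)/2) < 0 := by
  obtain ⟨hCp, hCe, hp0, he0, hp'0, he'0, heq, hpos⟩ := hsol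
  have h0s : (0:ℝ) ∈ Ico 0 R := ⟨le_refl 0, hR⟩
  have heqp : ∀ r ∈ Ioo (0:ℝ) R,
      derivWithin (derivWithin up (Ico 0 R)) (Ico 0 R) r
        + 2/r * derivWithin up (Ico 0 R) r
        = F * up r ^ ((3:ℝ)/2) - E * ue r ^ ((3:ℝ)/2) :=
    fun r hr => (heq r ⟨hr.1.le, hr.2⟩ hr.1).1
  have heqe : ∀ r ∈ Ioo (0:ℝ) R,
      derivWithin (derivWithin ue (Ico 0 R)) (Ico 0 R) r
        + 2/r * derivWithin ue (Ico 0 R) r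
        = B * ue r ^ ((3:ℝ)/2) - A * up r ^ ((3:ℝ)/2) :=
    fun r hr => (heq r ⟨hr.1.le, hr.2⟩ hr.1).2
  have hppos : ∀ r ∈ Ico (0:ℝ) R, 0 < up r := fun r hr => (hpos r hr).1
  have hepos : ∀ r ∈ Ico (0:ℝ) R, 0 < ue r := fun r hr => (hpos r hr).2
  have hcp : ContinuousWithinAt
      (fun r => F * up r ^ ((3:ℝ)/2) - E * ue r ^ ((3:ℝ)/2)) (Ico 0 R) 0 := by
    have cwf : ContinuousWithinAt up (Ico 0 R) 0 := hCp.continuousOn 0 h0s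
    have cwg : ContinuousWithinAt ue (Ico 0 R) 0 := hCe.continuousOn 0 h0s
    exact (continuousWithinAt_const.mul
        (cwf.rpow_const (Or.inl (by rw [hp0]; exact hα.ne')))).sub
      (continuousWithinAt_const.mul
        (cwg.rpow_const (Or.inl (by rw [he0]; exact hβ.ne'))))
  have hce : ContinuousWithinAt
      (fun r => B * ue r ^ ((3:ℝ)/2) - A * up r ^ ((3:ℝ)/2)) (Ico 0 R) 0 := by
    have cwf : ContinuousWithinAt up (Ico 0 R) 0 := hCp.continuousOn 0 h0s
    have cwg : ContinuousWithinAt ue (Ico 0 R) 0 := hCe.continuousOn 0 h0s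
    exact (continuousWithinAt_const.mul
        (cwg.rpow_const (Or.inl (by rw [he0]; exact hβ.ne')))).sub
      (continuousWithinAt_const.mul
        (cwf.rpow_const (Or.inl (by rw [hp0]; exact hα.ne'))))
  have kv := key1 hR hCp hp'0 hcp heqp
  have kw := key1 hR hCe he'0 hce heqe
  simp only [hp0, he0] at kv kw
  have hLp_nonpos := secondDeriv_nonpos hR hCp hp'0 hmonop
  have hLe_nonpos := secondDeriv_nonpos hR hCe he'0 hmonoe
  have hP : 0 < α ^ ((3:ℝ)/2) := Real.rpow_pos_of_pos hα _
  have hQ : 0 < β ^ ((3:ℝ)/2) := Real.rpow_pos_of_pos hβ _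
  have hv_nonpos : F * α ^ ((3:ℝ)/2) - E * β ^ ((3:ℝ)/2) ≤ 0 := by
    rw [kv]; linarith
  have hw_nonpos : B * β ^ ((3:ℝ)/2) - A * α ^ ((3:ℝ)/2) ≤ 0 := by
    rw [kw]; linarith
  constructor
  · rcases hv_nonpos.lt_or_eq with h | h
    · exact h
    · exfalso
      have hmul : B * F * α ^ ((3:ℝ)/2) < E * A * α ^ ((3:ℝ)/2) :=
        mul_lt_mul_of_pos_right hBFEA hP
      have hEQ : F * α ^ ((3:ℝ)/2) = E * β ^ ((3:ℝ)/2) := by linarith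
      have h2 : B * (F * α ^ ((3:ℝ)/2)) = B * (E * β ^ ((3:ℝ)/2)) := by rw [hEQ]
      have h3 : E * (B * β ^ ((3:ℝ)/2) - A * α ^ ((3:ℝ)/2)) < 0 := by nlinarith
      have hw_neg : B * β ^ ((3:ℝ)/2) - A * α ^ ((3:ℝ)/2) < 0 := by
        by_contra hcon
        push_neg at hcon
        nlinarith [mul_nonneg hE.le hcon]
      have hLe_neg : derivWithin (derivWithin ue (Ico 0 R)) (Ico 0 R) 0 < 0 := by
        linarith [kw]
      exact main_aux hR hF hE hα hβ hCp hCe hp0 he0 hp'0 he'0 heqp hppos hepos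
        hmonop hLe_neg h
  · rcases hw_nonpos.lt_or_eq with h | h
    · exact h
    · exfalso
      have hmul : B * F * β ^ ((3:ℝ)/2) < E * A * β ^ ((3:ℝ)/2) :=
        mul_lt_mul_of_pos_right hBFEA hQ
      have hEQ : B * β ^ ((3:ℝ)/2) = A * α ^ ((3:ℝ)/2) := by linarith
      have h2 : F * (B * β ^ ((3:ℝ)/2)) = F * (A * α ^ ((3:ℝ)/2)) := by rw [hEQ]
      have h3 : B * (F * α ^ ((3:ℝ)/2) - E * β ^ ((3:ℝ)/2)) < 0 := by nlinarith
      have hv_neg : F * α ^ ((3:ℝ)/2) - E * β ^ ((3:ℝ)/2) < 0 := by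
        by_contra hcon
        push_neg at hcon
        nlinarith [mul_nonneg hB.le hcon]
      have hLp_neg : derivWithin (derivWithin up (Ico 0 R)) (Ico 0 R) 0 < 0 := by
        linarith [kv]
      exact main_aux hR hB hA hβ hα hCe hCp he0 hp0 he'0 hp'0 heqe hepos hppos
        hmonoe hLp_neg h
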